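/- Let L = L(α_1, …, α_m) be a lattice in a finite extension K of ℚ_p with orthogonal basis satisfying |α_1|_p > |α_2|_p > ⋯ > |α_m|_p > |p·α_1|_p, and let β_1, …, β_m be any basis of the same lattice (related to the α's by a matrix in GL_m(ℤ_p)). Then at least one β_i satisfies |β_i|_p = |α_1|_p, and after subtracting suitable multiples c_i·β_1 with c_i ∈ {0,…,p−1} from the other β_j of maximal norm, some resulting vector β'_s has |β'_s|_p = λ_2 = |α_2|_p. -/

import Mathlib

open IsUltrametricDist

theorem stmt17 {p : ℕ} [Fact p.Prime] {K : Type*} [NormedField K]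
    [Algebra ℚ_[p] K] [FiniteDimensional ℚ_[p] K] [IsUltrametricDist K]
    (hext : ∀ x : ℚ_[p], ‖algebraMap ℚ_[p] K x‖ = ‖x‖)
    {m : ℕ} (hm : 2 ≤ m) (α β : Fin m → K)
    (hαindep : LinearIndependent ℚ_[p] α) (hβindep : LinearIndependent ℚ_[p] β)
    (hstrict : ∀ i j : Fin m, i < j → ‖α j‖ < ‖α i‖)
    (hp : ∀ i : Fin m, ‖(p : ℚ_[p]) • α ⟨0, by omega⟩‖ < ‖α i‖)
    -- β is a basis of the same lattice L(α) = L(β)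
    (hlat : (Set.range fun a : Fin m → ℤ_[p] => ∑ i, ((a i : ℚ_[p])) • α i)
          = (Set.range fun a : Fin m → ℤ_[p] => ∑ i, ((a i : ℚ_[p])) • β i)) :
    -- some β has maximal norm λ₁ = |α_1|
    (∃ i : Fin m, ‖β i‖ = ‖α ⟨0, by omega⟩‖) ∧
    -- λ₂ = |α_2| is the largest norm of a lattice vector of norm < λ₁
    IsGreatest
      {r : ℝ | ∃ a : Fin m → ℤ_[p],
          ‖∑ i, ((a i : ℚ_[p])) • α i‖ = r ∧ r < ‖α ⟨0, by omega⟩‖}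
      ‖α ⟨1, by omega⟩‖ ∧
    -- after subtracting a suitable multiple of a maximal-norm β from another β,
    -- one reaches a vector of norm λ₂ = |α_2|
    (∃ (i₀ s : Fin m) (c : ℕ), ‖β i₀‖ = ‖α ⟨0, by omega⟩‖ ∧ s ≠ i₀ ∧ c < p ∧
        ‖β s - ((c : ℚ_[p])) • β i₀‖ = ‖α ⟨1, by omega⟩‖) := by
  classical
  have pprime : p.Prime := Fact.out
  haveI : NeZero p := ⟨pprime.ne_zero⟩
  have hm0 : 0 < m := by omega
  have hm1 : 1 < m := by omega
  set i0 : Fin m := ⟨0, hm0⟩ with hi0def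
  set i1 : Fin m := ⟨1, hm1⟩ with hi1def
  haveI : Nonempty (Fin m) := ⟨i0⟩
  have h01 : i0 < i1 := by simp [hi0def, hi1def, Fin.lt_def]
  have h10 : i1 ≠ i0 := by simp [hi0def, hi1def, Fin.ext_iff]
  -- basic norm facts
  have hsmul : ∀ (a : ℚ_[p]) (x : K), ‖a • x‖ = ‖a‖ * ‖x‖ := by
    intro a x; rw [Algebra.smul_def, norm_mul, hext]
  have hterm : ∀ (z : ℤ_[p]) (x : K), ‖(z : ℚ_[p]) • x‖ ≤ ‖x‖ := by
    intro z x
    rw [hsmul]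
    calc ‖(z : ℚ_[p])‖ * ‖x‖ ≤ 1 * ‖x‖ :=
          mul_le_mul_of_nonneg_right z.norm_le_one (norm_nonneg x)
      _ = ‖x‖ := one_mul _
  have hsmallz : ∀ z : ℤ_[p], ‖z‖ < 1 → ‖z‖ ≤ (p : ℝ)⁻¹ := by
    intro z h
    obtain ⟨y, rfl⟩ := (PadicInt.norm_lt_one_iff_dvd z).mp h
    calc ‖(p : ℤ_[p]) * y‖ = ‖(p : ℤ_[p])‖ * ‖y‖ := norm_mul _ _
      _ ≤ (p : ℝ)⁻¹ * 1 := by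
          rw [PadicInt.norm_p]
          exact mul_le_mul_of_nonneg_left y.norm_le_one (by positivity)
      _ = (p : ℝ)⁻¹ := mul_one _
  have hsmall : ∀ z : ℤ_[p], ‖z‖ < 1 → ∀ x : K, ‖(z : ℚ_[p]) • x‖ ≤ ‖(p : ℚ_[p]) • x‖ := by
    intro z hz x
    rw [hsmul, hsmul, Padic.norm_p]
    have : ‖(z : ℚ_[p])‖ ≤ (p : ℝ)⁻¹ := hsmallz z hz
    exact mul_le_mul_of_nonneg_right this (norm_nonneg x)
  have hmono : ∀ i : Fin m, ‖α i‖ ≤ ‖α i0‖ := by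
    intro i
    rcases Nat.eq_zero_or_pos i.val with h | h
    · have : i = i0 := Fin.ext h
      rw [this]
    · exact (hstrict i0 i (by simpa [hi0def, Fin.lt_def] using h)).le
  have hle1 : ∀ i : Fin m, i ≠ i0 → ‖α i‖ ≤ ‖α i1‖ := by
    intro i hi
    have hv : i.val ≠ 0 := fun h => hi (Fin.ext h)
    rcases eq_or_ne i.val 1 with h | h
    · have : i = i1 := Fin.ext h
      rw [this]
    · exact (hstrict i1 i (by simp only [Fin.lt_def, hi1def, Fin.val_mk]; omega)).le
  have hboundA : ∀ a : Fin m → ℤ_[p], ‖∑ i, ((a i : ℚ_[p])) • α i‖ ≤ ‖α i0‖ := fun a =>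
    norm_sum_le_of_forall_le_of_nonneg (norm_nonneg _)
      (fun i _ => (hterm _ _).trans (hmono i))
  have hboundB : ∀ a : Fin m → ℤ_[p], ‖a i0‖ < 1 →
      ‖∑ i, ((a i : ℚ_[p])) • α i‖ ≤ ‖α i1‖ := by
    intro a ha
    refine norm_sum_le_of_forall_le_of_nonneg (norm_nonneg _) (fun i _ => ?_)
    rcases eq_or_ne i i0 with rfl | hi
    · exact (hsmall _ ha _).trans (hp i1).le
    · exact (hterm _ _).trans (hle1 i hi)
  have hCeq : ∀ a : Fin m → ℤ_[p], ‖a i0‖ = 1 →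
      ‖∑ i, ((a i : ℚ_[p])) • α i‖ = ‖α i0‖ := by
    intro a ha
    rw [← Finset.add_sum_erase _ _ (Finset.mem_univ i0)]
    have hfirst : ‖((a i0 : ℚ_[p])) • α i0‖ = ‖α i0‖ := by
      have h1 : ‖(a i0 : ℚ_[p])‖ = 1 := ha
      rw [hsmul, h1, one_mul]
    have hrest : ‖∑ i ∈ Finset.univ.erase i0, ((a i : ℚ_[p])) • α i‖ ≤ ‖α i1‖ :=
      norm_sum_le_of_forall_le_of_nonneg (norm_nonneg _)
        (fun i hi => (hterm _ _).trans (hle1 i (Finset.ne_of_mem_erase hi)))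
    have hlt : ‖∑ i ∈ Finset.univ.erase i0, ((a i : ℚ_[p])) • α i‖
        < ‖((a i0 : ℚ_[p])) • α i0‖ := by
      rw [hfirst]; exact hrest.trans_lt (hstrict i0 i1 h01)
    rw [norm_add_eq_max_of_norm_ne_norm hlt.ne', max_eq_left hlt.le, hfirst]
  have hC' : ∀ e : Fin m → ℤ_[p], ‖e i0‖ < 1 → ‖e i1‖ = 1 →
      ‖∑ k, ((e k : ℚ_[p])) • α k‖ = ‖α i1‖ := by
    intro e h0 h1
    rw [← Finset.add_sum_erase _ _ (Finset.mem_univ i1)]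
    have hfirst : ‖((e i1 : ℚ_[p])) • α i1‖ = ‖α i1‖ := by
      have he1 : ‖(e i1 : ℚ_[p])‖ = 1 := h1
      rw [hsmul, he1, one_mul]
    have hne : (Finset.univ.erase i1).Nonempty :=
      ⟨i0, Finset.mem_erase.mpr ⟨fun h => h10 h.symm, Finset.mem_univ _⟩⟩
    have hrest : ‖∑ k ∈ Finset.univ.erase i1, ((e k : ℚ_[p])) • α k‖ < ‖α i1‖ := by
      refine lt_of_le_of_lt (hne.norm_sum_le_sup'_norm _) ?_
      rw [Finset.sup'_lt_iff]
      intro k hk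
      have hk1 : k ≠ i1 := Finset.ne_of_mem_erase hk
      rcases eq_or_ne k i0 with rfl | hk0
      · exact (hsmall _ h0 _).trans_lt (hp i1)
      · have hkv0 : k.val ≠ 0 := fun h => hk0 (Fin.ext h)
        have hkv1 : k.val ≠ 1 := fun h => hk1 (Fin.ext h)
        have : i1 < k := by simp only [Fin.lt_def, hi1def, Fin.val_mk]; omega
        exact (hterm _ _).trans_lt (hstrict i1 k this)
    have hlt : ‖∑ k ∈ Finset.univ.erase i1, ((e k : ℚ_[p])) • α k‖
        < ‖((e i1 : ℚ_[p])) • α i1‖ := by rw [hfirst]; exact hrest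
    rw [norm_add_eq_max_of_norm_ne_norm hlt.ne', max_eq_left hlt.le, hfirst]
  -- coefficients of β in terms of α and conversely
  have hmemβ : ∀ j, ∃ b : Fin m → ℤ_[p], ∑ i, ((b i : ℚ_[p])) • α i = β j := by
    intro j
    have hj : β j ∈ (Set.range fun a : Fin m → ℤ_[p] => ∑ i, ((a i : ℚ_[p])) • β i) := by
      set a : Fin m → ℤ_[p] := Pi.single j 1 with hadef
      have hss : ∑ i, ((a i : ℚ_[p])) • β i = β j := by
        rw [Finset.sum_eq_single j]
        · simp [hadef]
        · intro i _ hij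
          simp [hadef, Pi.single_eq_of_ne hij]
        · simp
      exact ⟨a, hss⟩
    rw [← hlat] at hj
    exact hj
  have hmemα : ∀ j, ∃ d : Fin m → ℤ_[p], ∑ i, ((d i : ℚ_[p])) • β i = α j := by
    intro j
    have hj : α j ∈ (Set.range fun a : Fin m → ℤ_[p] => ∑ i, ((a i : ℚ_[p])) • α i) := by
      set a : Fin m → ℤ_[p] := Pi.single j 1 with hadef
      have hss : ∑ i, ((a i : ℚ_[p])) • α i = α j := by
        rw [Finset.sum_eq_single j]
        · simp [hadef]
        · intro i _ hij
          simp [hadef, Pi.single_eq_of_ne hij]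
        · simp
      exact ⟨a, hss⟩
    rw [hlat] at hj
    exact hj
  choose B hB using hmemβ
  choose D hD using hmemα
  -- linear independence gives D * B = 1
  have hli := Fintype.linearIndependent_iff.mp hαindep
  have hDB : ∀ j k, (∑ i, D j i * B i k) = if k = j then 1 else 0 := by
    intro j k
    have hαj : ∑ k, (∑ i, (D j i : ℚ_[p]) * (B i k : ℚ_[p])) • α k = α j := by
      calc ∑ k, (∑ i, (D j i : ℚ_[p]) * (B i k : ℚ_[p])) • α k
          = ∑ k, ∑ i, ((D j i : ℚ_[p]) * (B i k : ℚ_[p])) • α k := by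
            simp [Finset.sum_smul]
        _ = ∑ i, ∑ k, ((D j i : ℚ_[p]) * (B i k : ℚ_[p])) • α k := Finset.sum_comm
        _ = ∑ i, (D j i : ℚ_[p]) • ∑ k, (B i k : ℚ_[p]) • α k := by
            simp [Finset.smul_sum, mul_smul]
        _ = ∑ i, (D j i : ℚ_[p]) • β i := by
            simp only [hB]
        _ = α j := hD j
    have hzero : ∑ k, ((∑ i, (D j i : ℚ_[p]) * (B i k : ℚ_[p]))
        - if k = j then 1 else 0) • α k = 0 := by
      simp only [sub_smul, Finset.sum_sub_distrib, hαj, ite_smul, one_smul, zero_smul,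
        Finset.sum_ite_eq', Finset.mem_univ, if_true, sub_self]
    have := hli _ hzero k
    have hq : (∑ i, (D j i : ℚ_[p]) * (B i k : ℚ_[p])) = if k = j then 1 else 0 := by
      rwa [sub_eq_zero] at this
    have hcast : ((∑ i, D j i * B i k : ℤ_[p]) : ℚ_[p])
        = ∑ i, (D j i : ℚ_[p]) * (B i k : ℚ_[p]) := by
      rw [show ((∑ i, D j i * B i k : ℤ_[p]) : ℚ_[p]) = ∑ i, ((D j i * B i k : ℤ_[p]) : ℚ_[p])
        from map_sum PadicInt.Coe.ringHom _ Finset.univ]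
      push_cast
      rfl
    have hfin : ((∑ i, D j i * B i k : ℤ_[p]) : ℚ_[p])
        = ((if k = j then 1 else 0 : ℤ_[p]) : ℚ_[p]) := by
      rw [hcast, hq]
      split_ifs <;> simp
    exact Subtype.coe_injective hfin
  set MB : Matrix (Fin m) (Fin m) ℤ_[p] := Matrix.of B with hMB
  set MD : Matrix (Fin m) (Fin m) ℤ_[p] := Matrix.of D with hMD
  have hDBmat : MD * MB = 1 := by
    ext j k
    simp only [Matrix.mul_apply, hMB, hMD, Matrix.of_apply, Matrix.one_apply, hDB]
    by_cases h : k = j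
    · simp [h]
    · simp [h, Ne.symm h]
  have hBDmat : MB * MD = 1 := mul_eq_one_comm.mp hDBmat
  have hdet : IsUnit MB.det :=
    IsUnit.of_mul_eq_one MD.det (by rw [← Matrix.det_mul, hBDmat, Matrix.det_one])
  set φ : ℤ_[p] →+* ZMod p := PadicInt.toZMod with hφdef
  have hker : ∀ z : ℤ_[p], φ z = 0 ↔ ‖z‖ < 1 := by
    intro z
    rw [hφdef, ← RingHom.mem_ker, PadicInt.ker_toZMod, IsLocalRing.mem_maximalIdeal,
      PadicInt.mem_nonunits]
  have hone : ∀ z : ℤ_[p], φ z ≠ 0 ↔ ‖z‖ = 1 := by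
    intro z
    rw [ne_eq, hker]
    constructor
    · intro h
      exact le_antisymm z.norm_le_one (not_lt.mp h)
    · intro h
      rw [h]
      exact lt_irrefl 1
  have hdetbar : (MB.map φ).det ≠ 0 := by
    rw [← RingHom.mapMatrix_apply, ← RingHom.map_det]
    exact (hdet.map φ).ne_zero
  -- part 1
  have hβle : ∀ j, ‖β j‖ ≤ ‖α i0‖ := fun j => by rw [← hB j]; exact hboundA _
  have part1 : ∃ i : Fin m, ‖β i‖ = ‖α i0‖ := by
    obtain ⟨i, -, hi⟩ := exists_norm_finset_sum_le_of_nonempty Finset.univ_nonempty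
      (fun i => ((D i0 i : ℚ_[p])) • β i)
    refine ⟨i, le_antisymm (hβle i) ?_⟩
    calc ‖α i0‖ = ‖∑ i, ((D i0 i : ℚ_[p])) • β i‖ := (congrArg norm (hD i0)).symm
      _ ≤ ‖((D i0 i : ℚ_[p])) • β i‖ := hi
      _ ≤ ‖β i‖ := hterm _ _
  -- part 2
  have part2 : IsGreatest
      {r : ℝ | ∃ a : Fin m → ℤ_[p],
          ‖∑ i, ((a i : ℚ_[p])) • α i‖ = r ∧ r < ‖α i0‖} ‖α i1‖ := by
    constructor
    · refine ⟨Pi.single i1 1, ?_, hstrict i0 i1 h01⟩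
      congr 1
      rw [Finset.sum_eq_single i1]
      · simp
      · intro i _ hij
        simp [Pi.single_eq_of_ne hij]
      · simp
    · rintro r ⟨a, rfl, hr⟩
      rcases lt_or_eq_of_le (a i0).norm_le_one with h | h
      · exact hboundB a h
      · exact absurd (hCeq a h) hr.ne
  -- part 3
  obtain ⟨j₀, hj₀⟩ := part1
  have hBj₀ : ‖B j₀ i0‖ = 1 := by
    rcases lt_or_eq_of_le (B j₀ i0).norm_le_one with h | h
    · exfalso
      have hb := hboundB (B j₀) h
      rw [hB j₀] at hb
      have := hstrict i0 i1 h01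
      rw [hj₀] at hb
      linarith
    · exact h
  set u : ZMod p := φ (B j₀ i0) with hudef
  have hu : u ≠ 0 := (hone _).mpr hBj₀
  have hex : ∃ s, φ (B s i1) * u ≠ φ (B j₀ i1) * φ (B s i0) := by
    by_contra hno
    push_neg at hno
    apply hdetbar
    rw [← Matrix.exists_mulVec_eq_zero_iff]
    refine ⟨Pi.single i1 u + Pi.single i0 (-φ (B j₀ i1)), ?_, ?_⟩
    · intro h0
      apply hu
      have := congrFun h0 i1
      simpa [Pi.single_eq_of_ne h10, Pi.single_eq_of_ne (Ne.symm h10)] using this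
    · rw [Matrix.mulVec_add, Matrix.mulVec_single, Matrix.mulVec_single]
      funext j
      have := hno j
      simp only [Pi.add_apply, Matrix.map_apply, hMB, Matrix.of_apply, Pi.zero_apply,
        Pi.smul_apply, Matrix.col_apply, op_smul_eq_mul]
      linear_combination this
  obtain ⟨s, hs⟩ := hex
  have hsne : s ≠ j₀ := by
    rintro rfl
    exact hs rfl
  set c : ℕ := (φ (B s i0) * u⁻¹).val with hcdef
  have hc : ((c : ℕ) : ZMod p) = φ (B s i0) * u⁻¹ := by
    rw [hcdef, ZMod.natCast_val, ZMod.cast_id]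
  have hcp : c < p := ZMod.val_lt _
  set e : Fin m → ℤ_[p] := fun k => B s k - (c : ℤ_[p]) * B j₀ k with hedef
  have hφe : ∀ k, φ (e k) = φ (B s k) - (φ (B s i0) * u⁻¹) * φ (B j₀ k) := by
    intro k
    rw [hedef]
    simp only [map_sub, map_mul, map_natCast, hc]
  have he0 : ‖e i0‖ < 1 := by
    rw [← hker, hφe, ← hudef, mul_assoc, inv_mul_cancel₀ hu, mul_one, sub_self]
  have he1 : ‖e i1‖ = 1 := by
    rw [← hone, hφe]
    intro h
    apply hs
    rw [sub_eq_zero] at h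
    rw [h]
    field_simp
  have hveq : β s - ((c : ℚ_[p])) • β j₀ = ∑ k, ((e k : ℚ_[p])) • α k := by
    rw [← hB s, ← hB j₀, Finset.smul_sum, ← Finset.sum_sub_distrib]
    refine Finset.sum_congr rfl fun k _ => ?_
    rw [smul_smul, ← sub_smul]
    congr 1
  exact ⟨⟨j₀, hj₀⟩, part2, j₀, s, c, hj₀, hsne, hcp, by rw [hveq]; exact hC' e he0 he1⟩
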